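/- Let ψ_R : R → R be the ℚ-linear map with ψ_R(x_μ) = x_μ, ψ_R(h_α) = h_α, and ψ_R(f v) = f̄ ψ_R(v) for f ∈ ℚ(q) and v ∈ R, where f̄ denotes f with q replaced by q⁻¹. Then ψ_R is an involution (ψ_R² = id), it satisfies ψ_R E_α = E_α ψ_R, ψ_R F_α = F_α ψ_R, ψ_R K_α = K_α⁻¹ ψ_R for every α ∈ Π, and ⟨ψ_R u, ψ_R v⟩ = ⟨v, u⟩ for all u, v ∈ R. -/

import Mathlib

/-!
The adjoint representation of a simply-laced quantum group, realized concretely on the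
`ℚ(q)`-vector space with basis `{x_μ : μ ∈ Φ} ∪ {h_α : α ∈ Π}`.
-/

noncomputable section

open Polynomial

/-- The field `ℚ(q)` of rational functions over `ℚ`. -/
abbrev Qq : Type := RatFunc ℚ

/-- The indeterminate `q ∈ ℚ(q)`. -/
def qv : Qq := RatFunc.X

/-- A datum abstracting a simply-laced root system `Φ` with base `Π`, normalized so that
`(α, α) = 2` for roots: a symmetric bilinear form `B` together with the standard
combinatorial facts about pairings of roots and simple roots that hold in any finite
reduced irreducible crystallographic simply-laced root system. -/
structure SimplyLacedDatum (E : Type) [AddCommGroup E] [Module ℚ E] where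
  /-- the inner product `(·,·)` -/
  B : E →ₗ[ℚ] E →ₗ[ℚ] ℚ
  symm : ∀ x y : E, B x y = B y x
  /-- the set of roots `Φ` -/
  Phi : Set E
  /-- the base `Π` of simple roots -/
  Base : Set E
  base_sub : Base ⊆ Phi
  phi_finite : Phi.Finite
  zero_not_mem : (0 : E) ∉ Phi
  crystallographic : ∀ μ ∈ Phi, ∀ ν ∈ Phi, ∃ n : ℤ, B μ ν = n
  norm_two : ∀ μ ∈ Phi, B μ μ = 2
  neg_mem : ∀ μ ∈ Phi, -μ ∈ Phi
  base_pair : ∀ α ∈ Base, ∀ β ∈ Base, α ≠ β → B α β = 0 ∨ B α β = -1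
  pair_range : ∀ μ ∈ Phi, ∀ α ∈ Base,
      B μ α = -2 ∨ B μ α = -1 ∨ B μ α = 0 ∨ B μ α = 1 ∨ B μ α = 2
  pair_two_iff : ∀ μ ∈ Phi, ∀ α ∈ Base, (B μ α = 2 ↔ μ = α)
  pair_neg_two_iff : ∀ μ ∈ Phi, ∀ α ∈ Base, (B μ α = -2 ↔ μ = -α)
  add_mem : ∀ μ ∈ Phi, ∀ α ∈ Base, B μ α = -1 → μ + α ∈ Phi
  sub_mem : ∀ μ ∈ Phi, ∀ α ∈ Base, B μ α = 1 → μ - α ∈ Phi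

namespace SimplyLacedDatum

variable {E : Type} [AddCommGroup E] [Module ℚ E] (D : SimplyLacedDatum E)

/-- The index set for the canonical basis of the adjoint representation:
one index for each root `μ ∈ Φ` (the vector `x_μ`) and one for each simple root
`α ∈ Π` (the vector `h_α`). -/
def Idx : Type := {μ : E // μ ∈ D.Phi} ⊕ {α : E // α ∈ D.Base}

/-- The adjoint representation `R`, as the free `ℚ(q)`-module on `Idx`. -/
def R : Type := D.Idx →₀ Qq

instance : AddCommGroup D.R := inferInstanceAs (AddCommGroup (D.Idx →₀ Qq))
instance : Module Qq D.R := inferInstanceAs (Module Qq (D.Idx →₀ Qq))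

/-- The canonical basis vector `x_μ`, for a root `μ ∈ Φ`. -/
def xv (μ : E) (h : μ ∈ D.Phi) : D.R := Finsupp.single (Sum.inl ⟨μ, h⟩) 1

/-- The canonical basis vector `h_α`, for a simple root `α ∈ Π`. -/
def hv (α : E) (h : α ∈ D.Base) : D.R := Finsupp.single (Sum.inr ⟨α, h⟩) 1

/-- The `ℚ(q)`-linear operator on `R` sending the basis vector indexed by `i` to `v i`. -/
def opOf (v : D.Idx → D.R) : D.R →ₗ[Qq] D.R :=
  Finsupp.lsum Qq fun i => LinearMap.toSpanSingleton Qq D.R (v i)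

open Classical in
/-- The images of the basis vectors under `E_α`. -/
def Evec (α : E) (hα : α ∈ D.Base) : D.Idx → D.R := fun i =>
  match i with
  | Sum.inl μ =>
      if h : D.B μ.1 α = -1 then D.xv (μ.1 + α) (D.add_mem μ.1 μ.2 α hα h)
      else if D.B μ.1 α = -2 then D.hv α hα
      else 0
  | Sum.inr β =>
      if β.1 = α then (qv + qv⁻¹) • D.xv α (D.base_sub hα)
      else if D.B β.1 α = -1 then D.xv α (D.base_sub hα)
      else 0

open Classical in
/-- The images of the basis vectors under `F_α`. -/
def Fvec (α : E) (hα : α ∈ D.Base) : D.Idx → D.R := fun i =>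
  match i with
  | Sum.inl μ =>
      if h : D.B μ.1 α = 1 then D.xv (μ.1 - α) (D.sub_mem μ.1 μ.2 α hα h)
      else if D.B μ.1 α = 2 then D.hv α hα
      else 0
  | Sum.inr β =>
      if β.1 = α then (qv + qv⁻¹) • D.xv (-α) (D.neg_mem α (D.base_sub hα))
      else if D.B β.1 α = -1 then D.xv (-α) (D.neg_mem α (D.base_sub hα))
      else 0

/-- The images of the basis vectors under `K_α`: `K_α x_μ = q^{(α,μ)} x_μ`,
`K_α h_β = h_β`. -/
def Kvec (α : E) (hα : α ∈ D.Base) : D.Idx → D.R := fun i =>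
  match i with
  | Sum.inl μ => qv ^ (D.B α μ.1).num • D.xv μ.1 μ.2
  | Sum.inr β => D.hv β.1 β.2

/-- The images of the basis vectors under `K_α⁻¹`: `K_α⁻¹ x_μ = q^{−(α,μ)} x_μ`,
`K_α⁻¹ h_β = h_β`. -/
def Kinvvec (α : E) (hα : α ∈ D.Base) : D.Idx → D.R := fun i =>
  match i with
  | Sum.inl μ => qv ^ (-(D.B α μ.1).num) • D.xv μ.1 μ.2
  | Sum.inr β => D.hv β.1 β.2

/-- The operator `E_α` on the adjoint representation. -/
def opE (α : E) (hα : α ∈ D.Base) : D.R →ₗ[Qq] D.R := D.opOf (D.Evec α hα)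

/-- The operator `F_α` on the adjoint representation. -/
def opF (α : E) (hα : α ∈ D.Base) : D.R →ₗ[Qq] D.R := D.opOf (D.Fvec α hα)

/-- The operator `K_α` on the adjoint representation. -/
def opK (α : E) (hα : α ∈ D.Base) : D.R →ₗ[Qq] D.R := D.opOf (D.Kvec α hα)

/-- The operator `K_α⁻¹` on the adjoint representation. -/
def opKinv (α : E) (hα : α ∈ D.Base) : D.R →ₗ[Qq] D.R := D.opOf (D.Kinvvec α hα)

end SimplyLacedDatum

end

noncomputable section

namespace SimplyLacedDatum

/-- `X` is transcendental over `ℚ` in `ℚ(q)`. -/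
theorem ratfuncX_transcendental : Transcendental ℚ (RatFunc.X : Qq) := by
  have h1 : Transcendental ℚ (Polynomial.X : Polynomial ℚ) := Polynomial.transcendental_X ℚ
  have h2 := (transcendental_algebraMap_iff (R := ℚ) (S := Polynomial ℚ) (A := Qq)
      (IsFractionRing.injective (Polynomial ℚ) Qq)).mpr h1
  simpa using h2

/-- `q⁻¹` is transcendental over `ℚ` in `ℚ(q)`. -/
theorem qv_inv_transcendental : Transcendental ℚ (qv⁻¹ : Qq) := fun h =>
  ratfuncX_transcendental (IsAlgebraic.inv_iff.mp h)

/-- The bar involution of `ℚ(q)`: the `ℚ`-algebra map determined by `q ↦ q⁻¹`. -/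
def barHom : Qq →+* Qq :=
  IsFractionRing.lift (A := Polynomial ℚ)
    (g := (Polynomial.aeval (qv⁻¹ : Qq)).toRingHom)
    (transcendental_iff_injective.mp qv_inv_transcendental)

variable {E : Type} [AddCommGroup E] [Module ℚ E] (D : SimplyLacedDatum E)

open Classical in
/-- The Gram matrix of the semilinear form on the canonical basis of `R`:
`⟨x_μ, x_ν⟩ = δ_{μν}`, `⟨x_μ, h_α⟩ = ⟨h_α, x_μ⟩ = 0`, `⟨h_α, h_α⟩ = 1 + q²`,
`⟨h_α, h_β⟩ = q` if `(α,β) = −1`, and `⟨h_α, h_β⟩ = 0` if `(α,β) = 0`. -/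
def gram : D.Idx → D.Idx → Qq := fun i j =>
  match i, j with
  | Sum.inl μ, Sum.inl ν => if μ = ν then 1 else 0
  | Sum.inl _, Sum.inr _ => 0
  | Sum.inr _, Sum.inl _ => 0
  | Sum.inr α, Sum.inr β =>
      if α = β then 1 + qv ^ 2 else if D.B α.1 β.1 = -1 then qv else 0

/-- The semilinear form `⟨·,·⟩` on `R`: `ℚ(q)`-antilinear in the first variable
(via the bar involution `q ↦ q⁻¹`) and `ℚ(q)`-linear in the second, given on the
canonical basis by the Gram matrix `gram`. -/
def form (u v : D.R) : Qq :=
  u.sum fun i c => v.sum fun j d => barHom c * d * D.gram i j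

end SimplyLacedDatum

end

noncomputable section

/-- The `ℚ`-linear bar involution `ψ_R` of `R`: it fixes the canonical basis vectors
`x_μ` and `h_α` and conjugates coefficients, `ψ_R(f v) = f̄ ψ_R(v)` for `f ∈ ℚ(q)`. -/
def SimplyLacedDatum.psiOp {E : Type} [AddCommGroup E] [Module ℚ E]
    (D : SimplyLacedDatum E) (u : D.R) : D.R :=
  Finsupp.mapRange (⇑SimplyLacedDatum.barHom) (map_zero _) u

noncomputable section

namespace SimplyLacedDatum

theorem barHom_algebraMap' (p : Polynomial ℚ) :
    barHom (algebraMap (Polynomial ℚ) Qq p) = Polynomial.aeval (qv⁻¹ : Qq) p :=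
  IsFractionRing.lift_algebraMap _ _

theorem barHom_qv : barHom qv = qv⁻¹ := by
  have := barHom_algebraMap' Polynomial.X
  rwa [RatFunc.algebraMap_X, Polynomial.aeval_X] at this

theorem barHom_qv_inv : barHom qv⁻¹ = qv := by
  rw [map_inv₀, barHom_qv, inv_inv]

theorem barHom_barHom (f : Qq) : barHom (barHom f) = f := by
  have h : barHom.comp barHom = RingHom.id Qq := by
    apply IsLocalization.ringHom_ext (nonZeroDivisors (Polynomial ℚ))
    apply Polynomial.ringHom_ext
    · intro a
      have hC : algebraMap (Polynomial ℚ) Qq (Polynomial.C a)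
          = algebraMap ℚ Qq a := by
        simp [Polynomial.algebraMap_apply]
      have hb : barHom (algebraMap ℚ Qq a) = algebraMap ℚ Qq a := by
        rw [← hC, barHom_algebraMap', Polynomial.aeval_C]
        exact hC.symm
      simp only [RingHom.comp_apply, RingHom.id_apply]
      rw [hC, hb, hb]
      try exact hC.symm
    · simp only [RingHom.comp_apply, RingHom.id_apply, RatFunc.algebraMap_X]
      rw [show (RatFunc.X : Qq) = qv from rfl, barHom_qv, barHom_qv_inv]
  exact DFunLike.congr_fun h f

variable {E : Type} [AddCommGroup E] [Module ℚ E] (D : SimplyLacedDatum E)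

theorem psiOp_add (u v : D.R) : D.psiOp (u + v) = D.psiOp u + D.psiOp v := by
  have : ∀ w₁ w₂ : D.Idx →₀ Qq,
      Finsupp.mapRange (⇑barHom) (map_zero _) (w₁ + w₂)
        = Finsupp.mapRange (⇑barHom) (map_zero _) w₁
          + Finsupp.mapRange (⇑barHom) (map_zero _) w₂ := by
    intro w₁ w₂
    ext i
    simp [Finsupp.mapRange_apply, map_add]
  exact this u v

theorem psiOp_zero : D.psiOp 0 = 0 := by
  have : Finsupp.mapRange (⇑barHom) (map_zero _) (0 : D.Idx →₀ Qq) = 0 := by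
    ext i; simp
  exact this

theorem psiOp_smul (c : Qq) (u : D.R) :
    D.psiOp (c • u) = barHom c • D.psiOp u := by
  have : ∀ w : D.Idx →₀ Qq,
      Finsupp.mapRange (⇑barHom) (map_zero _) (c • w)
        = barHom c • Finsupp.mapRange (⇑barHom) (map_zero _) w := by
    intro w
    ext i
    simp [Finsupp.mapRange_apply, Finsupp.smul_apply, smul_eq_mul, map_mul]
  exact this u

theorem psiOp_single (i : D.Idx) (c : Qq) :
    D.psiOp (Finsupp.single i c) = Finsupp.single i (barHom c) :=
  Finsupp.mapRange_single

theorem psiOp_psiOp (u : D.R) : D.psiOp (D.psiOp u) = u := by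
  have : ∀ w : D.Idx →₀ Qq,
      Finsupp.mapRange (⇑barHom) (map_zero _)
        (Finsupp.mapRange (⇑barHom) (map_zero _) w) = w := by
    intro w
    ext i
    simp [Finsupp.mapRange_apply, barHom_barHom]
  exact this u

theorem psiOp_xv (μ : E) (h : μ ∈ D.Phi) : D.psiOp (D.xv μ h) = D.xv μ h := by
  exact (D.psiOp_single (Sum.inl ⟨μ, h⟩) 1).trans (congrArg (Finsupp.single _) (map_one _))

theorem psiOp_hv (α : E) (h : α ∈ D.Base) : D.psiOp (D.hv α h) = D.hv α h := by
  exact (D.psiOp_single (Sum.inr ⟨α, h⟩) 1).trans (congrArg (Finsupp.single _) (map_one _))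

theorem opOf_single (v : D.Idx → D.R) (i : D.Idx) (c : Qq) :
    D.opOf v (Finsupp.single i c) = c • v i := by
  show (Finsupp.single i c).sum (fun j d => d • v j) = c • v i
  exact Finsupp.sum_single_index (zero_smul _ _)

theorem psiOp_opOf (v w : D.Idx → D.R) (hvw : ∀ i, D.psiOp (v i) = w i) (u : D.R) :
    D.psiOp (D.opOf v u) = D.opOf w (D.psiOp u) := by
  induction u using Finsupp.induction_linear with
  | zero => exact ((congrArg D.psiOp (map_zero (D.opOf v))).trans D.psiOp_zero).trans ((map_zero (D.opOf w)).symm.trans (congrArg (D.opOf w) D.psiOp_zero.symm))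
  | add f g hf hg => exact (congrArg D.psiOp (map_add (D.opOf v) f g)).trans ((D.psiOp_add _ _).trans ((congrArg₂ (· + ·) hf hg).trans ((map_add (D.opOf w) _ _).symm.trans (congrArg (D.opOf w) (D.psiOp_add f g).symm))))
  | single i c =>
      rw [opOf_single, psiOp_smul, hvw, psiOp_single, opOf_single]

theorem psiOp_Evec (α : E) (hα : α ∈ D.Base) (i : D.Idx) :
    D.psiOp (D.Evec α hα i) = D.Evec α hα i := by
  rcases i with μ | β <;> simp only [Evec] <;> split_ifs <;>
    simp only [psiOp_zero, psiOp_xv, psiOp_hv, psiOp_smul, map_add,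
      barHom_qv, barHom_qv_inv]
  rw [add_comm]

theorem psiOp_Fvec (α : E) (hα : α ∈ D.Base) (i : D.Idx) :
    D.psiOp (D.Fvec α hα i) = D.Fvec α hα i := by
  rcases i with μ | β <;> simp only [Fvec] <;> split_ifs <;>
    simp only [psiOp_zero, psiOp_xv, psiOp_hv, psiOp_smul, map_add,
      barHom_qv, barHom_qv_inv]
  rw [add_comm]

theorem psiOp_Kvec (α : E) (hα : α ∈ D.Base) (i : D.Idx) :
    D.psiOp (D.Kvec α hα i) = D.Kinvvec α hα i := by
  rcases i with μ | β <;> simp only [Kvec, Kinvvec]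
  · rw [psiOp_smul, psiOp_xv, map_zpow₀, barHom_qv, inv_zpow, ← zpow_neg]
  · exact psiOp_hv _ _ _

theorem gram_symm (i j : D.Idx) : D.gram i j = D.gram j i := by
  rcases i with μ | a <;> rcases j with ν | b <;> simp only [gram]
  · by_cases h : μ = ν
    · subst h; rfl
    · rw [if_neg h, if_neg (Ne.symm h)]
  · by_cases h : a = b
    · subst h; rfl
    · rw [if_neg h, if_neg (Ne.symm h), D.symm a.1 b.1]

theorem psiOp_sum (u : D.R) (h : D.Idx → Qq → Qq) (h0 : ∀ a, h a 0 = 0) :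
    (D.psiOp u).sum h = u.sum fun a b => h a (barHom b) := by
  have : ∀ w : D.Idx →₀ Qq,
      (Finsupp.mapRange (⇑barHom) (map_zero _) w).sum h
        = w.sum fun a b => h a (barHom b) := fun w =>
    Finsupp.sum_mapRange_index h0
  exact this u

theorem form_psiOp (u v : D.R) : D.form (D.psiOp u) (D.psiOp v) = D.form v u := by
  rw [form, form]
  rw [D.psiOp_sum u
    (fun i c => (D.psiOp v).sum fun j d => barHom c * d * D.gram i j)
    (fun a => by simp [Finsupp.sum])]
  refine (Finsupp.sum_comm (u : D.Idx →₀ Qq) (D.psiOp v : D.Idx →₀ Qq) _).trans ?_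
  rw [D.psiOp_sum v
    (fun j d => u.sum fun i c => barHom (barHom c) * d * D.gram i j)
    (fun a => by simp [Finsupp.sum])]
  apply Finsupp.sum_congr
  intro j hj
  apply Finsupp.sum_congr
  intro i hi
  rw [barHom_barHom, D.gram_symm i j]
  ring

end SimplyLacedDatum

end


/-- `ψ_R` is an involution of `R`, it commutes with `E_α` and `F_α`,
satisfies `ψ_R K_α = K_α⁻¹ ψ_R`, and `⟨ψ_R u, ψ_R v⟩ = ⟨v, u⟩` for all `u, v ∈ R`. -/
theorem SimplyLacedDatum.psiOp_properties {E : Type} [AddCommGroup E] [Module ℚ E]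
    (D : SimplyLacedDatum E) :
    (∀ u : D.R, D.psiOp (D.psiOp u) = u) ∧
    (∀ α : E, ∀ hα : α ∈ D.Base, ∀ u : D.R,
      D.psiOp (D.opE α hα u) = D.opE α hα (D.psiOp u) ∧
      D.psiOp (D.opF α hα u) = D.opF α hα (D.psiOp u) ∧
      D.psiOp (D.opK α hα u) = D.opKinv α hα (D.psiOp u)) ∧
    (∀ u v : D.R, D.form (D.psiOp u) (D.psiOp v) = D.form v u) := by
  refine ⟨D.psiOp_psiOp, fun α hα u => ?_, D.form_psiOp⟩
  exact ⟨D.psiOp_opOf _ _ (D.psiOp_Evec α hα) u,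
    D.psiOp_opOf _ _ (D.psiOp_Fvec α hα) u,
    D.psiOp_opOf _ _ (D.psiOp_Kvec α hα) u⟩


end
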